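/- Let O be a commutative ring, π ∈ O with π² = -π₀. For max{0, 2i-n} ≤ ℓ < i ≤ n, consider the free O-module with basis f₁,...,f_{2n} and the submodule F̃ generated by: f_{i+1-ℓ}, ..., f_{n-i+ℓ}, the elements f_{n-i+ℓ+m} + π f_{i-ℓ+1-m} for 1 ≤ m ≤ i-ℓ, and the elements f_{n+m} + π f_{2n+1-m} for 1 ≤ m ≤ i-ℓ (together with one extra basis vector), as in the explicit lift of the paper. Then reducing modulo π recovers the subspace spanned by f_{i+1-ℓ}, ..., f_{n+i-ℓ}; that is, the O-submodule F̃ is a free direct summand lifting the subspace F^ℓ = ⟨f_{i+1-ℓ},...,f_{n+i-ℓ}⟩ over the residue ring O/(π). -/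

import Mathlib

/-- The 1-indexed standard basis vector `f_j` of `O^{2n}` (zero otherwise, including for
`j` out of range). -/
def stdVec (O : Type*) [CommRing O] (n j : ℕ) : Fin (2 * n) → O :=
  fun t => if (t : ℕ) + 1 = j then 1 else 0

/-- the generating set of the lift `F̃`:
`f_j` for `i+1-ℓ ≤ j ≤ n-i+ℓ`; `f_{n-i+ℓ+m} + π f_{i-ℓ+1-m}` for `1 ≤ m ≤ i-ℓ`; and
`f_{n+m} + π f_{2n+1-m}` for `1 ≤ m ≤ i-ℓ`. -/
def liftGens (O : Type*) [CommRing O] (π : O) (n i ℓ : ℕ) : Set (Fin (2 * n) → O) :=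
  (fun j => stdVec O n j) '' Set.Icc (i + 1 - ℓ) (n - i + ℓ) ∪
    (fun m => stdVec O n (n - i + ℓ + m) + π • stdVec O n (i - ℓ + 1 - m)) ''
      Set.Icc 1 (i - ℓ) ∪
    (fun m => stdVec O n (n + m) + π • stdVec O n (2 * n + 1 - m)) '' Set.Icc 1 (i - ℓ)


section Aux

variable {O : Type*} [CommRing O]

/-- The nilpotent correction map. -/
def nMap (π : O) (n k : ℕ) (hk : 2 * k ≤ n) : (Fin (2 * n) → O) →ₗ[O] (Fin (2 * n) → O) where
  toFun x := fun r =>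
    if h1 : (r : ℕ) < k then π * x ⟨n - 1 - (r : ℕ), by omega⟩
    else if h2 : 2 * n - k ≤ (r : ℕ) then π * x ⟨3 * n - 1 - (r : ℕ), by
      have := r.isLt; omega⟩
    else 0
  map_add' x y := by
    funext r
    simp only [Pi.add_apply]
    split_ifs <;> ring
  map_smul' c x := by
    funext r
    simp only [Pi.smul_apply, smul_eq_mul, RingHom.id_apply]
    split_ifs <;> ring

lemma nMap_nMap (π : O) (n k : ℕ) (hk : 2 * k ≤ n) (x : Fin (2 * n) → O) :
    nMap π n k hk (nMap π n k hk x) = 0 := by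
  funext r
  have hr := r.isLt
  simp only [nMap, LinearMap.coe_mk, AddHom.coe_mk, Pi.zero_apply]
  split_ifs <;> first | simp | (exfalso; omega)

/-- The unipotent change of basis. -/
noncomputable def uEquiv (π : O) (n k : ℕ) (hk : 2 * k ≤ n) :
    (Fin (2 * n) → O) ≃ₗ[O] (Fin (2 * n) → O) :=
  LinearEquiv.ofLinear (LinearMap.id + nMap π n k hk) (LinearMap.id - nMap π n k hk)
    (by
      apply LinearMap.ext; intro x
      simp [map_sub, nMap_nMap])
    (by
      apply LinearMap.ext; intro x
      simp [map_add, nMap_nMap])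

/-- The adapted basis. -/
noncomputable def basisB (π : O) (n k : ℕ) (hk : 2 * k ≤ n) :
    Module.Basis (Fin (2 * n)) O (Fin (2 * n) → O) :=
  (Pi.basisFun O (Fin (2 * n))).map (uEquiv π n k hk)

lemma basisB_apply (π : O) {n k : ℕ} (hk : 2 * k ≤ n) (t r : Fin (2 * n)) :
    basisB π n k hk t r =
      (if (r : ℕ) = (t : ℕ) then 1 else 0) +
        (if (r : ℕ) < k then (if n - 1 - (r : ℕ) = (t : ℕ) then π else 0)
          else if 2 * n - k ≤ (r : ℕ) then
            (if 3 * n - 1 - (r : ℕ) = (t : ℕ) then π else 0) else 0) := by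
  have hr := r.isLt
  simp only [basisB, Module.Basis.map_apply, Pi.basisFun_apply, uEquiv, LinearEquiv.ofLinear_apply,
    LinearMap.add_apply, LinearMap.id_apply, Pi.add_apply, nMap, LinearMap.coe_mk,
    AddHom.coe_mk, Pi.single_apply, Fin.ext_iff, Fin.val_mk, mul_ite, mul_one, mul_zero]
  split_ifs <;> first | rfl | ring1 | (exfalso; omega)

end Aux

section Gens

variable {O : Type*} [CommRing O] (π : O)

lemma genA {n i ℓ : ℕ} (hℓi : ℓ < i) (hin : i ≤ n) (hk : 2 * (i - ℓ) ≤ n) {j : ℕ}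
    (h1 : i + 1 - ℓ ≤ j) (h2 : j ≤ n - i + ℓ) :
    stdVec O n j = basisB π n (i - ℓ) hk ⟨j - 1, by omega⟩ := by
  funext r
  have hr := r.isLt
  rw [basisB_apply]
  simp only [stdVec, Fin.val_mk]
  split_ifs <;> first | ring1 | (exfalso; omega)

lemma genB {n i ℓ : ℕ} (hℓi : ℓ < i) (hin : i ≤ n) (hk : 2 * (i - ℓ) ≤ n) {m : ℕ}
    (h1 : 1 ≤ m) (h2 : m ≤ i - ℓ) :
    stdVec O n (n - i + ℓ + m) + π • stdVec O n (i - ℓ + 1 - m) =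
      basisB π n (i - ℓ) hk ⟨n - i + ℓ + m - 1, by omega⟩ := by
  funext r
  have hr := r.isLt
  rw [Pi.add_apply, Pi.smul_apply, smul_eq_mul, basisB_apply]
  simp only [stdVec, Fin.val_mk]
  split_ifs <;> first | ring1 | (exfalso; omega)

lemma genC {n i ℓ : ℕ} (hℓi : ℓ < i) (hin : i ≤ n) (hk : 2 * (i - ℓ) ≤ n) {m : ℕ}
    (h1 : 1 ≤ m) (h2 : m ≤ i - ℓ) :
    stdVec O n (n + m) + π • stdVec O n (2 * n + 1 - m) =
      basisB π n (i - ℓ) hk ⟨n + m - 1, by omega⟩ := by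
  funext r
  have hr := r.isLt
  rw [Pi.add_apply, Pi.smul_apply, smul_eq_mul, basisB_apply]
  simp only [stdVec, Fin.val_mk]
  split_ifs <;> first | ring1 | (exfalso; omega)

end Gens

def Tset (n i ℓ : ℕ) : Set (Fin (2 * n)) := {t | i - ℓ ≤ (t : ℕ) ∧ (t : ℕ) < n + i - ℓ}

def tsetEquiv (n i ℓ : ℕ) (hℓi : ℓ < i) (hin : i ≤ n) : ↥(Tset n i ℓ) ≃ Fin n where
  toFun t := ⟨(t.1 : ℕ) - (i - ℓ), by
    obtain ⟨h1, h2⟩ := t.2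
    have := t.1.isLt
    omega⟩
  invFun j := ⟨⟨(j : ℕ) + (i - ℓ), by have := j.isLt; omega⟩, by
    have := j.isLt
    simp only [Tset, Set.mem_setOf_eq, Fin.val_mk]
    omega⟩
  left_inv t := by
    obtain ⟨h1, h2⟩ := t.2
    apply Subtype.ext
    apply Fin.ext
    simp only [Fin.val_mk]
    omega
  right_inv j := by
    apply Fin.ext
    simp only [Fin.val_mk]
    omega

/-- Let `O` be a commutative local ring and `π` an element of its maximal
ideal.  For `max{0, 2i-n} ≤ ℓ < i ≤ n`, the submodule `F̃ ⊂ O^{2n}` spanned by the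
generators above is a free direct summand of rank `n`, and its image under the
coordinatewise reduction map `O^{2n} → (O/π)^{2n}` equals the span of the basis vectors
`f_j` for `i+1-ℓ ≤ j ≤ n+i-ℓ`. -/
theorem lift_is_free_summand_reducing_to_Fl (O : Type*) [CommRing O] [IsLocalRing O]
    (π : O) (hπ : π ∈ IsLocalRing.maximalIdeal O)
    (n i ℓ : ℕ) (hℓi : ℓ < i) (hin : i ≤ n) (h2i : 2 * i ≤ n + ℓ) :
    (∃ C : Submodule O (Fin (2 * n) → O),
        IsCompl (Submodule.span O (liftGens O π n i ℓ)) C) ∧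
      Module.Free O ↥(Submodule.span O (liftGens O π n i ℓ)) ∧
      Module.rank O ↥(Submodule.span O (liftGens O π n i ℓ)) = n ∧
      Submodule.map
          (LinearMap.compLeft
            (Algebra.linearMap O (O ⧸ Ideal.span {π})) (Fin (2 * n)))
          (Submodule.span O (liftGens O π n i ℓ)) =
        Submodule.span O
          ((fun j => stdVec (O ⧸ Ideal.span {π}) n j) '' Set.Icc (i + 1 - ℓ) (n + i - ℓ)) := by
  
    classical
    have hk : 2 * (i - ℓ) ≤ n := by omega
    set b := basisB π n (i - ℓ) hk with hb
    have hset : liftGens O π n i ℓ = b '' Tset n i ℓ := by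
      ext x
      simp only [liftGens, Set.mem_union, Set.mem_image, Set.mem_Icc, Tset, Set.mem_setOf_eq]
      constructor
      · rintro ((⟨j, ⟨hj1, hj2⟩, rfl⟩ | ⟨m, ⟨hm1, hm2⟩, rfl⟩) | ⟨m, ⟨hm1, hm2⟩, rfl⟩)
        · exact ⟨⟨j - 1, by omega⟩, ⟨show i - ℓ ≤ j - 1 by omega,
            show j - 1 < n + i - ℓ by omega⟩, (genA π hℓi hin hk hj1 hj2).symm⟩
        · exact ⟨⟨n - i + ℓ + m - 1, by omega⟩, ⟨show i - ℓ ≤ n - i + ℓ + m - 1 by omega,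
            show n - i + ℓ + m - 1 < n + i - ℓ by omega⟩, (genB π hℓi hin hk hm1 hm2).symm⟩
        · exact ⟨⟨n + m - 1, by omega⟩, ⟨show i - ℓ ≤ n + m - 1 by omega,
            show n + m - 1 < n + i - ℓ by omega⟩, (genC π hℓi hin hk hm1 hm2).symm⟩
      · rintro ⟨t, ⟨ht1, ht2⟩, rfl⟩
        have hr := t.isLt
        rcases Nat.lt_or_ge (t : ℕ) (n - i + ℓ) with h | h
        · left; left
          exact ⟨(t : ℕ) + 1, ⟨by omega, by omega⟩,
            (genA π hℓi hin hk (j := (t : ℕ) + 1) (by omega) (by omega)).trans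
              (congrArg b (Fin.ext (show (t : ℕ) + 1 - 1 = (t : ℕ) by omega)))⟩
        · rcases Nat.lt_or_ge (t : ℕ) n with h' | h'
          · left; right
            exact ⟨(t : ℕ) - (n - i + ℓ) + 1, ⟨by omega, by omega⟩,
              (genB π hℓi hin hk (m := (t : ℕ) - (n - i + ℓ) + 1) (by omega) (by omega)).trans
                (congrArg b (Fin.ext
                  (show n - i + ℓ + ((t : ℕ) - (n - i + ℓ) + 1) - 1 = (t : ℕ) by omega)))⟩
          · right
            exact ⟨(t : ℕ) - n + 1, ⟨by omega, by omega⟩,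
              (genC π hℓi hin hk (m := (t : ℕ) - n + 1) (by omega) (by omega)).trans
                (congrArg b (Fin.ext (show n + ((t : ℕ) - n + 1) - 1 = (t : ℕ) by omega)))⟩
    rw [hset]
    have hli : LinearIndependent O (fun t : ↥(Tset n i ℓ) => b t) :=
      b.linearIndependent.comp _ Subtype.val_injective
    have hrange : (Set.range fun t : ↥(Tset n i ℓ) => b t) = b '' Tset n i ℓ :=
      (Set.image_eq_range _ _).symm
    have hbas : Module.Basis ↥(Tset n i ℓ) O ↥(Submodule.span O (b '' Tset n i ℓ)) := by
      have h := Module.Basis.span hli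
      rwa [hrange] at h
    refine ⟨⟨Submodule.span O (b '' (Tset n i ℓ)ᶜ), ?_, ?_⟩, Module.Free.of_basis hbas, ?_, ?_⟩
    · rw [Submodule.disjoint_def]
      intro x hx hx'
      have h1 := b.mem_span_image.1 hx
      have h2 := b.mem_span_image.1 hx'
      have h0 : b.repr x = 0 := by
        rw [← Finsupp.support_eq_empty]
        ext a
        simp only [Finset.notMem_empty, iff_false]
        intro ha
        exact h2 ha (h1 ha)
      exact b.repr.map_eq_zero_iff.mp h0
    · rw [codisjoint_iff, ← Submodule.span_union, ← Set.image_union, Set.union_compl_self,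
        Set.image_univ, b.span_eq]
    · have : Fintype ↥(Tset n i ℓ) := Fintype.ofEquiv (Fin n) (tsetEquiv n i ℓ hℓi hin).symm
      rw [rank_eq_card_basis hbas, Fintype.card_congr (tsetEquiv n i ℓ hℓi hin),
        Fintype.card_fin]
    · have hπ0 : algebraMap O (O ⧸ Ideal.span {π}) π = 0 := by
        rw [Ideal.Quotient.algebraMap_eq, Ideal.Quotient.eq_zero_iff_mem]
        exact Ideal.mem_span_singleton_self π
      have hred : ∀ t : Fin (2 * n),
          (LinearMap.compLeft (Algebra.linearMap O (O ⧸ Ideal.span {π})) (Fin (2 * n))) (b t) =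
            stdVec (O ⧸ Ideal.span {π}) n ((t : ℕ) + 1) := by
        intro t
        funext s
        have hs := s.isLt
        show algebraMap O (O ⧸ Ideal.span {π}) (b t s) = _
        rw [hb, basisB_apply]
        simp only [map_add, apply_ite (algebraMap O (O ⧸ Ideal.span {π})), map_one, map_zero,
          hπ0, stdVec]
        split_ifs <;> first | rfl | ring1 | (exfalso; omega)
      rw [Submodule.map_span]
      congr 1
      ext x
      simp only [Set.mem_image, Tset, Set.mem_setOf_eq, Set.mem_Icc]
      constructor
      · rintro ⟨y, ⟨t, ⟨ht1, ht2⟩, rfl⟩, rfl⟩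
        exact ⟨(t : ℕ) + 1, ⟨by omega, by omega⟩, (hred t).symm⟩
      · rintro ⟨j, ⟨hj1, hj2⟩, rfl⟩
        refine ⟨b ⟨j - 1, by omega⟩, ⟨⟨j - 1, by omega⟩, ⟨show i - ℓ ≤ j - 1 by omega,
          show j - 1 < n + i - ℓ by omega⟩, rfl⟩, ?_⟩
        exact (hred ⟨j - 1, by omega⟩).trans
          (congrArg (stdVec (O ⧸ Ideal.span {π}) n) (show j - 1 + 1 = j by omega))
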